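/- arXiv:1911.06563 — 2 statements merged into one kernel-verified Lean document; each statement's English description precedes it below -/
import Mathlib

section
/- Let n ≥ 1, let c ∈ ℝ and let k ∈ ℕ. There exists a constant C > 0 such that for all ξ ∈ ℝⁿ with ξ ≠ 0, the k-th iterated derivative of the function ξ ↦ ‖ξ‖^c satisfies ‖D^k(‖·‖^c)(ξ)‖ ≤ C ‖ξ‖^{c−k} (norm of the k-th iterated Fréchet derivative, computed on ℝⁿ \ {0} where the function is smooth). -/
noncomputable section

set_option maxHeartbeats 1000000 in
/-- derivative bounds for `ξ ↦ ‖ξ‖^c` on `ℝⁿ \ {0}`,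
estimate (2.1.11) of the paper with `c = 2pσ`. -/
theorem stmt_8 (n : ℕ) (hn : 1 ≤ n) (c : ℝ) (k : ℕ) :
    ∃ C : ℝ, 0 < C ∧
      ∀ ξ : EuclideanSpace ℝ (Fin n), ξ ≠ 0 →
        ‖iteratedFDerivWithin ℝ k (fun ξ : EuclideanSpace ℝ (Fin n) => ‖ξ‖ ^ c)
            {ξ : EuclideanSpace ℝ (Fin n) | ξ ≠ 0} ξ‖ ≤ C * ‖ξ‖ ^ (c - k) := by
  classical
  set E := EuclideanSpace ℝ (Fin n)
  set f : E → ℝ := fun ξ => ‖ξ‖ ^ c with hf_def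
  set s : Set E := {ξ : E | ξ ≠ 0} with hs_def
  have hs_open : IsOpen s := isOpen_compl_singleton
  have hs : UniqueDiffOn ℝ s := hs_open.uniqueDiffOn
  -- smoothness of f on s
  have hf : ContDiffOn ℝ (⊤ : ℕ∞) f s := by
    intro x hx
    have hx0 : x ≠ 0 := hx
    have h1 : ContDiffAt ℝ (⊤ : ℕ∞) (fun ξ : E => ‖ξ‖) x := contDiffAt_norm ℝ hx0
    have h2 : ContDiffAt ℝ (⊤ : ℕ∞) (fun t : ℝ => t ^ c) ‖x‖ :=
      Real.contDiffAt_rpow_const_of_ne (norm_ne_zero_iff.2 hx0)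
    exact (h2.comp x h1).contDiffWithinAt
  -- continuity of the iterated derivative on s
  have hcont : ContinuousOn (fun ξ => iteratedFDerivWithin ℝ k f s ξ) s :=
    hf.continuousOn_iteratedFDerivWithin (by exact_mod_cast le_top) hs
  have hsphere : IsCompact (Metric.sphere (0 : E) 1) := isCompact_sphere 0 1
  have hsub : Metric.sphere (0 : E) 1 ⊆ s := by
    intro u hu
    have : ‖u‖ = 1 := by simpa using hu
    simp only [hs_def, Set.mem_setOf_eq]
    intro h
    rw [h] at this; simp at this
  obtain ⟨C₀, hC₀⟩ := hsphere.exists_bound_of_continuousOn (hcont.mono hsub)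
  refine ⟨max C₀ 1, lt_of_lt_of_le one_pos (le_max_right _ _), ?_⟩
  intro ξ hξ
  have ht : (0 : ℝ) < ‖ξ‖ := norm_pos_iff.2 hξ
  set t : ℝ := ‖ξ‖ with ht_def
  set u : E := t⁻¹ • ξ with hu_def
  have hu_norm : ‖u‖ = 1 := by
    rw [hu_def, norm_smul, norm_inv, Real.norm_eq_abs, abs_of_pos ht, inv_mul_cancel₀ ht.ne']
  have hu_sphere : u ∈ Metric.sphere (0 : E) 1 := by simpa using hu_norm
  have hu_s : u ∈ s := hsub hu_sphere
  have hξ_s : ξ ∈ s := hξ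
  -- the scaling map
  set g : E →L[ℝ] E := t • ContinuousLinearMap.id ℝ E with hg_def
  have hg_apply : ∀ x : E, g x = t • x := fun x => rfl
  have hg_pre : g ⁻¹' s = s := by
    ext x
    simp [hs_def, hg_apply, smul_eq_zero, ht.ne']
  have hgu : g u = ξ := by
    rw [hg_apply, hu_def, smul_smul, mul_inv_cancel₀ ht.ne', one_smul]
  -- composition formula
  have hcomp := ContinuousLinearMap.iteratedFDerivWithin_comp_right (f := f) g hf hs
      (by rw [hg_pre]; exact hs) (x := u) (hgu ▸ hξ_s) (i := k) (by exact_mod_cast le_top)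
  rw [hg_pre, hgu] at hcomp
  -- f ∘ g = t^c • f
  have hfg : f ∘ g = (t ^ c : ℝ) • f := by
    funext x
    simp only [Function.comp_apply, hg_apply, hf_def, Pi.smul_apply, smul_eq_mul]
    rw [norm_smul, Real.norm_eq_abs, abs_of_pos ht,
      Real.mul_rpow ht.le (norm_nonneg x)]
  have hsmul : iteratedFDerivWithin ℝ k (f ∘ g) s u
      = (t ^ c : ℝ) • iteratedFDerivWithin ℝ k f s u := by
    rw [hfg]
    exact iteratedFDerivWithin_const_smul_apply ((hf.contDiffWithinAt hu_s).of_le (by exact_mod_cast le_top)) hs hu_s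
  -- key identity
  have hkey : (iteratedFDerivWithin ℝ k f s ξ).compContinuousLinearMap (fun _ => g)
      = (t ^ c : ℝ) • iteratedFDerivWithin ℝ k f s u := by
    rw [← hcomp, hsmul]
  -- undo the composition with the inverse scaling
  set g' : E →L[ℝ] E := t⁻¹ • ContinuousLinearMap.id ℝ E with hg'_def
  have hgg' : ((iteratedFDerivWithin ℝ k f s ξ).compContinuousLinearMap
        (fun _ => g)).compContinuousLinearMap (fun _ => g')
      = iteratedFDerivWithin ℝ k f s ξ := by
    ext m
    simp only [ContinuousMultilinearMap.compContinuousLinearMap_apply]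
    congr 1
    funext i
    show t • (t⁻¹ • m i) = m i
    rw [smul_smul, mul_inv_cancel₀ ht.ne', one_smul]
  have hg'_norm : ‖g'‖ ≤ t⁻¹ := by
    rw [hg'_def]
    calc ‖t⁻¹ • ContinuousLinearMap.id ℝ E‖ ≤ ‖t⁻¹‖ * ‖ContinuousLinearMap.id ℝ E‖ :=
          ContinuousLinearMap.opNorm_smul_le _ _
    _ ≤ t⁻¹ * 1 := by
        apply mul_le_mul _ ContinuousLinearMap.norm_id_le (norm_nonneg _)
          (by positivity)
        rw [Real.norm_eq_abs, abs_of_pos (by positivity)]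
    _ = t⁻¹ := mul_one _
  have hbound : ‖iteratedFDerivWithin ℝ k f s ξ‖
      ≤ (t ^ c * C₀) * (t⁻¹) ^ k := by
    rw [← hgg']
    calc ‖((iteratedFDerivWithin ℝ k f s ξ).compContinuousLinearMap
          (fun _ => g)).compContinuousLinearMap (fun _ => g')‖
        ≤ ‖(iteratedFDerivWithin ℝ k f s ξ).compContinuousLinearMap (fun _ => g)‖
            * ∏ _i : Fin k, ‖g'‖ :=
          ContinuousMultilinearMap.norm_compContinuousLinearMap_le _ _
      _ ≤ (t ^ c * C₀) * (t⁻¹) ^ k := by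
          apply mul_le_mul
          · rw [hkey]
            have hns := norm_smul (t ^ c) (iteratedFDerivWithin ℝ k f s u)
            rw [hns, Real.norm_eq_abs, abs_of_pos (Real.rpow_pos_of_pos ht c)]
            exact mul_le_mul_of_nonneg_left (hC₀ u hu_sphere)
              (Real.rpow_pos_of_pos ht c).le
          · calc ∏ _i : Fin k, ‖g'‖ ≤ ∏ _i : Fin k, t⁻¹ :=
                Finset.prod_le_prod (fun _ _ => norm_nonneg _) (fun _ _ => hg'_norm)
            _ = (t⁻¹) ^ k := by simp
          · exact Finset.prod_nonneg (fun _ _ => norm_nonneg _)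
          · have h1 : (0 : ℝ) ≤ C₀ := le_trans (norm_nonneg _) (hC₀ u hu_sphere)
            positivity
  calc ‖iteratedFDerivWithin ℝ k f s ξ‖ ≤ (t ^ c * C₀) * (t⁻¹) ^ k := hbound
    _ = C₀ * t ^ (c - (k : ℝ)) := by
        rw [Real.rpow_sub ht, Real.rpow_natCast]
        field_simp
        rw [mul_assoc, ← mul_pow, one_div, inv_mul_cancel₀ ht.ne', one_pow, mul_one]
    _ ≤ max C₀ 1 * t ^ (c - (k : ℝ)) := by
        apply mul_le_mul_of_nonneg_right (le_max_left _ _)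
        positivity
end
end

section
/- Let σ > 1, n ≥ 1 and k ∈ ℕ. There exists a constant C > 0 such that for all ξ ∈ ℝⁿ with ‖ξ‖^(2σ) ≥ 5, the k-th iterated derivative of φ (computed within the open set U = {ξ : ‖ξ‖^(2σ) > 4}, on which φ is smooth) satisfies ‖D^k φ(ξ)‖ ≤ C ‖ξ‖^{−2σ−k}. -/
open MeasureTheory

noncomputable section

variable {n : ℕ}

/-- The function `φ(ξ) = −1 + ∫₀¹ (1 − 4s‖ξ‖^{−2σ})^{−1/2} ds`. -/
def phi (σ : ℝ) (ξ : EuclideanSpace ℝ (Fin n)) : ℝ :=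
  -1 + ∫ s in (0:ℝ)..1, (1 - 4 * s * ‖ξ‖ ^ (-(2 * σ))) ^ (-(1/2) : ℝ)

open Real Set
open scoped ContDiff

/-! ### Auxiliary function `hfun` and its properties -/

def hfun : ℝ → ℝ := fun u => -1 + 2 / (1 + Real.sqrt (1 - 4*u))

lemma integ (u : ℝ) (hu0 : 0 < u) (hu : u < 1/4) :
    ∫ s in (0:ℝ)..1, (1 - 4 * s * u) ^ (-(1/2) : ℝ)
      = 2 / (1 + Real.sqrt (1 - 4*u)) := by
  have key : ∀ s ∈ uIcc (0:ℝ) 1,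
      HasDerivAt (fun s => -(1/(2*u)) * Real.sqrt (1 - 4*s*u))
        ((1 - 4 * s * u) ^ (-(1/2) : ℝ)) s := by
    intro s hs
    rw [uIcc_of_le (by norm_num)] at hs
    have hpos : 0 < 1 - 4*s*u := by nlinarith [hs.1, hs.2]
    have h1 : HasDerivAt (fun s : ℝ => 1 - 4*s*u) (-(4*u)) s := by
      have := ((hasDerivAt_id s).const_mul (4*u)).const_sub 1
      simpa [mul_comm, mul_left_comm, mul_assoc] using this
    have h2 := (Real.hasDerivAt_sqrt hpos.ne').comp s h1
    have h3 := h2.const_mul (-(1/(2*u)))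
    refine h3.congr_deriv ?_
    have hsq : Real.sqrt (1 - 4*s*u) > 0 := Real.sqrt_pos.2 hpos
    have hsq2 : Real.sqrt (1 - 4*s*u) ^ 2 = 1 - 4*s*u := Real.sq_sqrt hpos.le
    rw [Real.rpow_neg hpos.le, ← Real.sqrt_eq_rpow]
    field_simp
    ring
  have cont : IntervalIntegrable (fun s => (1 - 4 * s * u) ^ (-(1/2) : ℝ))
      MeasureTheory.volume 0 1 := by
    apply ContinuousOn.intervalIntegrable
    apply ContinuousOn.rpow_const
    · fun_prop
    · intro s hs
      rw [uIcc_of_le (by norm_num)] at hs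
      have : 0 < 1 - 4*s*u := by nlinarith [hs.1, hs.2]
      exact Or.inl this.ne'
  rw [intervalIntegral.integral_eq_sub_of_hasDerivAt key cont]
  have hs4 : Real.sqrt (1 - 4*u) ^ 2 = 1 - 4*u := Real.sq_sqrt (by linarith)
  have hs0 : 0 ≤ Real.sqrt (1 - 4*u) := Real.sqrt_nonneg _
  rw [show (1 - 4*(0:ℝ)*u) = 1 by ring, show (1 - 4*(1:ℝ)*u) = 1 - 4*u by ring,
    Real.sqrt_one]
  have hd : 0 < 1 + Real.sqrt (1 - 4*u) := by linarith
  generalize Real.sqrt (1 - 4*u) = r at hs4 hs0 hd ⊢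
  field_simp
  nlinarith [hs4, hs0]

lemma hfun_smooth : ContDiffOn ℝ ∞ hfun (Iio (1/4 : ℝ)) := by
  have hs : ContDiffOn ℝ ∞ (fun u : ℝ => Real.sqrt (1 - 4*u)) (Iio (1/4 : ℝ)) := by
    intro u hu
    have h1 : (0:ℝ) < 1 - 4*u := by simp only [mem_Iio] at hu; linarith
    exact ((Real.contDiffAt_sqrt h1.ne').comp u (by fun_prop)).contDiffWithinAt
  apply ContDiffOn.add contDiffOn_const
  apply ContDiffOn.div contDiffOn_const (contDiffOn_const.add hs)
  intro u hu
  have h1 : (0:ℝ) < 1 - 4*u := by simp only [mem_Iio] at hu; linarith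
  have := Real.sqrt_nonneg (1 - 4*u)
  intro h; linarith [h]

lemma hfun_abs {ε : ℝ} (h0 : 0 < ε) (h5 : ε ≤ 1/5) : |hfun ε| ≤ 4 * ε := by
  have h1 : (0:ℝ) < 1 - 4*ε := by linarith
  have hs0 : 0 ≤ Real.sqrt (1 - 4*ε) := Real.sqrt_nonneg _
  have hs2 : Real.sqrt (1 - 4*ε) ^ 2 = 1 - 4*ε := Real.sq_sqrt h1.le
  have hs1 : Real.sqrt (1 - 4*ε) ≤ 1 := by nlinarith
  have hd : (0:ℝ) < 1 + Real.sqrt (1 - 4*ε) := by linarith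
  have hA : 2 / (1 + Real.sqrt (1 - 4*ε)) ≤ 1 + 4*ε := by
    rw [div_le_iff₀ hd]; nlinarith
  have hB : 1 ≤ 2 / (1 + Real.sqrt (1 - 4*ε)) := by
    rw [le_div_iff₀ hd]; nlinarith
  rw [abs_le]
  unfold hfun
  constructor <;> nlinarith

/-! ### The radial symbol -/

lemma ufun_smooth {E : Type*} [NormedAddCommGroup E] [InnerProductSpace ℝ E] (σ : ℝ) :
    ContDiffOn ℝ ∞ (fun ξ : E => ‖ξ‖ ^ (-(2*σ)) : E → ℝ) {ξ : E | ξ ≠ 0} := by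
  have key : ∀ ξ : E, ‖ξ‖ ^ (-(2*σ)) = (‖ξ‖^2 : ℝ) ^ (-σ) := by
    intro ξ
    rw [← Real.rpow_natCast ‖ξ‖ 2, ← Real.rpow_mul (norm_nonneg _)]
    norm_num
  intro ξ hξ
  have hnz : (‖ξ‖^2 : ℝ) ≠ 0 := pow_ne_zero 2 (norm_ne_zero_iff.2 hξ)
  have : ContDiffAt ℝ ∞ (fun ξ : E => (‖ξ‖^2 : ℝ) ^ (-σ)) ξ :=
    (Real.contDiffAt_rpow_const_of_ne hnz).comp ξ (contDiff_norm_sq (𝕜 := ℝ)).contDiffAt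
  exact (this.contDiffWithinAt).congr (fun y _ => key y) (key ξ)

/-! ### Uniform bounds for iterated derivatives on compact sets -/

lemma bound_aux {E F : Type*} [NormedAddCommGroup E] [NormedSpace ℝ E]
    [NormedAddCommGroup F] [NormedSpace ℝ F] {f : E → F} {s K : Set E}
    (hs : IsOpen s) (hf : ContDiffOn ℝ ∞ f s) (hK : IsCompact K) (hKs : K ⊆ s) (k : ℕ) :
    ∃ M : ℝ, 0 ≤ M ∧ ∀ i, i ≤ k → ∀ x ∈ K, ‖iteratedFDeriv ℝ i f x‖ ≤ M := by
  have single : ∀ i : ℕ, ∃ M : ℝ, ∀ x ∈ K, ‖iteratedFDeriv ℝ i f x‖ ≤ M := by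
    intro i
    have h1 : ContinuousOn (iteratedFDerivWithin ℝ i f s) s :=
      hf.continuousOn_iteratedFDerivWithin (by exact_mod_cast le_top) hs.uniqueDiffOn
    have h2 : ContinuousOn (iteratedFDeriv ℝ i f) s :=
      h1.congr fun x hx => (iteratedFDerivWithin_of_isOpen i hs hx).symm
    exact hK.exists_bound_of_continuousOn (h2.mono hKs)
  induction k with
  | zero =>
    obtain ⟨M, hM⟩ := single 0
    refine ⟨max M 0, le_max_right _ _, fun i hi x hx => ?_⟩
    obtain rfl : i = 0 := by omega
    exact (hM x hx).trans (le_max_left _ _)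
  | succ k ih =>
    obtain ⟨M, hM0, hM⟩ := ih
    obtain ⟨M', hM'⟩ := single (k+1)
    refine ⟨max M M', hM0.trans (le_max_left _ _), fun i hi x hx => ?_⟩
    rcases Nat.lt_or_ge i (k+1) with h | h
    · exact (hM i (by omega) x hx).trans (le_max_left _ _)
    · obtain rfl : i = k + 1 := by omega
      exact (hM' x hx).trans (le_max_right _ _)

/-! ### Closed form for `phi` -/

lemma phi_eq {n : ℕ} (σ : ℝ) (hσ : 1 < σ) (ξ : EuclideanSpace ℝ (Fin n))
    (hξ : 4 < ‖ξ‖ ^ (2*σ)) : phi σ ξ = hfun (‖ξ‖ ^ (-(2*σ))) := by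
  have hσ0 : (0:ℝ) < 2*σ := by linarith
  have hR : 0 < ‖ξ‖ := by
    rcases eq_or_lt_of_le (norm_nonneg ξ) with h | h
    · rw [← h, Real.zero_rpow hσ0.ne'] at hξ; linarith
    · exact h
  have hpow : 0 < ‖ξ‖ ^ (2*σ) := Real.rpow_pos_of_pos hR _
  have hu : ‖ξ‖ ^ (-(2*σ)) = (‖ξ‖ ^ (2*σ))⁻¹ := Real.rpow_neg (norm_nonneg _) _
  have hu0 : 0 < ‖ξ‖ ^ (-(2*σ)) := by rw [hu]; exact inv_pos.2 hpow
  have hu4 : ‖ξ‖ ^ (-(2*σ)) < 1/4 := by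
    rw [hu, show (1:ℝ)/4 = 4⁻¹ by norm_num]
    exact inv_strictAnti₀ (by norm_num) hξ
  rw [phi, integ _ hu0 hu4, hfun]

/-! ### Main theorem -/

set_option maxHeartbeats 1000000 in
/-- derivative bounds `|∂^α φ(ξ)| ≲ |ξ|^{−2σ−|α|}` for large frequencies. -/
theorem stmt_9 (σ : ℝ) (hσ : 1 < σ) (n : ℕ) (hn : 1 ≤ n) (k : ℕ) :
    ∃ C : ℝ, 0 < C ∧
      ∀ ξ : EuclideanSpace ℝ (Fin n), 5 ≤ ‖ξ‖ ^ (2 * σ) →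
        ‖iteratedFDerivWithin ℝ k (phi σ)
            {ξ : EuclideanSpace ℝ (Fin n) | 4 < ‖ξ‖ ^ (2 * σ)} ξ‖ ≤
          C * ‖ξ‖ ^ (-(2 * σ) - k) := by
  have hσ0 : (0:ℝ) < 2*σ := by linarith
  set U : Set (EuclideanSpace ℝ (Fin n)) := {ξ : (EuclideanSpace ℝ (Fin n)) | 4 < ‖ξ‖ ^ (2 * σ)} with hUdef
  set u₀ : (EuclideanSpace ℝ (Fin n)) → ℝ := fun ξ => ‖ξ‖ ^ (-(2*σ)) with hu₀def
  have hUopen : IsOpen U := by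
    have hc : Continuous (fun ξ : (EuclideanSpace ℝ (Fin n)) => ‖ξ‖ ^ (2*σ)) :=
      continuous_norm.rpow_const (fun ξ => Or.inr hσ0.le)
    exact isOpen_Ioi.preimage hc
  have hU0 : U ⊆ {ξ : (EuclideanSpace ℝ (Fin n)) | ξ ≠ 0} := by
    intro ξ hξ h0
    have : (4:ℝ) < ‖ξ‖ ^ (2*σ) := hξ
    rw [h0, norm_zero, Real.zero_rpow hσ0.ne'] at this
    linarith
  have humaps : MapsTo u₀ U (Iio (1/4 : ℝ)) := by
    intro ξ hξ
    have h4 : (4:ℝ) < ‖ξ‖ ^ (2*σ) := hξ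
    have : u₀ ξ = (‖ξ‖ ^ (2*σ))⁻¹ := Real.rpow_neg (norm_nonneg _) _
    rw [mem_Iio, this, show (1:ℝ)/4 = 4⁻¹ by norm_num]
    exact inv_strictAnti₀ (by norm_num) h4
  have hphiU : ContDiffOn ℝ ∞ (phi σ) U :=
    ((hfun_smooth.comp ((ufun_smooth σ).mono hU0) humaps).congr
      (fun ξ hξ => phi_eq σ hσ ξ hξ))
  -- constants
  obtain ⟨Mh, hMh0, hMh⟩ := bound_aux isOpen_Iio hfun_smooth
    (isCompact_Icc (a := (0:ℝ)) (b := 1/5))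
    (fun x hx => lt_of_le_of_lt hx.2 (by norm_num)) k
  obtain ⟨Bu, hBu0, hBu⟩ := bound_aux (isOpen_compl_singleton (x := (0:(EuclideanSpace ℝ (Fin n)))))
    (ufun_smooth σ) (isCompact_sphere (0:(EuclideanSpace ℝ (Fin n))) 1)
    (fun x hx => by
      simp only [mem_sphere_zero_iff_norm] at hx
      simp only [mem_compl_iff, mem_singleton_iff]
      intro h0; rw [h0, norm_zero] at hx; norm_num at hx) k
  set M := max 4 Mh with hMdef
  set D := max 1 Bu with hDdef
  have hM4 : (4:ℝ) ≤ M := le_max_left _ _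
  have hM0 : (0:ℝ) < M := by linarith
  have hD1 : (1:ℝ) ≤ D := le_max_left _ _
  have hD0 : (0:ℝ) < D := by linarith
  refine ⟨(Nat.factorial k : ℝ) * M * D^k, mul_pos (mul_pos (by positivity) hM0) (pow_pos hD0 k), ?_⟩
  intro ξ hξ5
  have hξU : ξ ∈ U := by show 4 < ‖ξ‖ ^ (2*σ); linarith
  have hξ0 : ξ ≠ 0 := hU0 hξU
  have hR : 0 < ‖ξ‖ := norm_pos_iff.2 hξ0
  set R := ‖ξ‖ with hRdef
  set ε := R ^ (-(2*σ)) with hεdef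
  have hεinv : ε = (R ^ (2*σ))⁻¹ := Real.rpow_neg hR.le _
  have hRpow : 0 < R ^ (2*σ) := Real.rpow_pos_of_pos hR _
  have hε0 : 0 < ε := by rw [hεinv]; exact inv_pos.2 hRpow
  have hε5 : ε ≤ 1/5 := by
    rw [hεinv, show (1:ℝ)/5 = 5⁻¹ by norm_num]
    exact inv_anti₀ (by norm_num) hξ5
  have hε4 : ε < 1/4 := lt_of_le_of_lt hε5 (by norm_num)
  have hε1 : ε ≤ 1 := by linarith
  set gE : (EuclideanSpace ℝ (Fin n)) →L[ℝ] (EuclideanSpace ℝ (Fin n)) := R • ContinuousLinearMap.id ℝ (EuclideanSpace ℝ (Fin n)) with hgEdef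
  have hgEapp : ∀ v : (EuclideanSpace ℝ (Fin n)), gE v = R • v := fun v => rfl
  set η := R⁻¹ • ξ with hηdef
  have hgη : gE η = ξ := by
    rw [hgEapp, hηdef, smul_smul, mul_inv_cancel₀ hR.ne', one_smul]
  have hηnorm : ‖η‖ = 1 := by
    rw [hηdef, norm_smul, norm_inv, Real.norm_eq_abs, abs_of_pos hR]
    exact inv_mul_cancel₀ hR.ne'
  set s' := gE ⁻¹' U with hs'def
  have hs'open : IsOpen s' := hUopen.preimage gE.continuous
  have hηs' : η ∈ s' := by
    show gE η ∈ U
    rw [hgη]; exact hξU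
  have hs'ne : s' ⊆ {v : (EuclideanSpace ℝ (Fin n)) | v ≠ 0} := by
    intro v hv h0
    exact hU0 hv (by rw [hgEapp, h0, smul_zero])
  -- scaling of the symbol
  have hscale : ∀ v : (EuclideanSpace ℝ (Fin n)), ‖gE v‖ ^ (-(2*σ)) = ε * u₀ v := by
    intro v
    rw [hgEapp, norm_smul, Real.norm_eq_abs, abs_of_pos hR,
      Real.mul_rpow hR.le (norm_nonneg v)]
  -- scaling identity for the iterated derivative
  have key : iteratedFDerivWithin ℝ k (phi σ ∘ gE) s' η
      = (iteratedFDerivWithin ℝ k (phi σ) U ξ).compContinuousLinearMap (fun _ => gE) := by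
    have h := gE.iteratedFDerivWithin_comp_right hphiU hUopen.uniqueDiffOn
      hs'open.uniqueDiffOn (x := η) (by rw [hgη]; exact hξU) (i := k)
      (by exact_mod_cast le_top)
    rw [hgη] at h
    exact h
  have hBA : ‖iteratedFDerivWithin ℝ k (phi σ) U ξ‖
      ≤ (R⁻¹)^k * ‖iteratedFDerivWithin ℝ k (phi σ ∘ gE) s' η‖ := by
    set B := iteratedFDerivWithin ℝ k (phi σ) U ξ with hB
    set A := iteratedFDerivWithin ℝ k (phi σ ∘ gE) s' η with hA
    refine ContinuousMultilinearMap.opNorm_le_bound ?_ (fun m => ?_)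
    · positivity
    · have h1 : A (fun j => R⁻¹ • m j) = B m := by
        rw [key]
        simp only [ContinuousMultilinearMap.compContinuousLinearMap_apply]
        congr 1
        funext j
        rw [hgEapp, smul_smul, mul_inv_cancel₀ hR.ne', one_smul]
      calc ‖B m‖ = ‖A (fun j => R⁻¹ • m j)‖ := by rw [h1]
        _ ≤ ‖A‖ * ∏ j, ‖R⁻¹ • m j‖ := A.le_opNorm _
        _ = (R⁻¹)^k * ‖A‖ * ∏ j, ‖m j‖ := by
            simp only [norm_smul, norm_inv, Real.norm_eq_abs, abs_of_pos hR]
            rw [Finset.prod_mul_distrib, Finset.prod_const]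
            simp only [Finset.card_univ, Fintype.card_fin]
            ring
  -- rewrite the composed map
  set mR : ℝ →L[ℝ] ℝ := ε • ContinuousLinearMap.id ℝ ℝ with hmRdef
  have hmRapp : ∀ v : ℝ, mR v = ε * v := fun v => rfl
  set t : Set ℝ := ⇑mR ⁻¹' (Iio (1/4 : ℝ)) with htdef
  have htopen : IsOpen t := isOpen_Iio.preimage mR.continuous
  have hcongrA : Set.EqOn (phi σ ∘ gE) ((hfun ∘ mR) ∘ u₀) s' := by
    intro v hv
    have hvU : gE v ∈ U := hv
    show phi σ (gE v) = hfun (mR (u₀ v))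
    rw [phi_eq σ hσ _ hvU, hmRapp, hscale v]
  have hAeq : iteratedFDerivWithin ℝ k (phi σ ∘ gE) s' η
      = iteratedFDerivWithin ℝ k ((hfun ∘ mR) ∘ u₀) s' η :=
    iteratedFDerivWithin_congr hcongrA hηs' k
  have hu₀η : u₀ η = 1 := by
    show ‖η‖ ^ (-(2*σ)) = 1
    rw [hηnorm, Real.one_rpow]
  have hgt : ContDiffOn ℝ ∞ (hfun ∘ mR) t := hfun_smooth.comp_continuousLinearMap mR
  have hnmR : ‖mR‖ ≤ ε := by
    apply ContinuousLinearMap.opNorm_le_bound _ hε0.le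
    intro v
    rw [hmRapp, Real.norm_eq_abs, Real.norm_eq_abs, abs_mul, abs_of_pos hε0]
  have hC : ∀ i, i ≤ k → ‖iteratedFDerivWithin ℝ i (hfun ∘ mR) t (u₀ η)‖ ≤ M * ε := by
    intro i hi
    rw [hu₀η]
    have hmem : mR (1:ℝ) ∈ Iio (1/4 : ℝ) := by
      rw [hmRapp, mul_one]; exact hε4
    have hkey := mR.iteratedFDerivWithin_comp_right hfun_smooth isOpen_Iio.uniqueDiffOn
      htopen.uniqueDiffOn (x := (1:ℝ)) hmem (i := i) (by exact_mod_cast le_top)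
    rw [hkey]
    have hmε1 : mR (1:ℝ) = ε := by rw [hmRapp, mul_one]
    have hstep : ‖(iteratedFDerivWithin ℝ i hfun (Iio (1/4 : ℝ)) (mR 1)).compContinuousLinearMap
        (fun _ => mR)‖ ≤ ‖iteratedFDerivWithin ℝ i hfun (Iio (1/4 : ℝ)) ε‖ * ‖mR‖^i := by
      rw [hmε1]
      refine (ContinuousMultilinearMap.norm_compContinuousLinearMap_le _ _).trans ?_
      rw [Finset.prod_const]
      simp [Finset.card_univ]
    refine hstep.trans ?_
    rcases Nat.eq_zero_or_pos i with rfl | hi1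
    · rw [norm_iteratedFDerivWithin_zero, pow_zero, mul_one, Real.norm_eq_abs]
      calc |hfun ε| ≤ 4 * ε := hfun_abs hε0 hε5
        _ ≤ M * ε := by nlinarith
    · have hw : ‖iteratedFDerivWithin ℝ i hfun (Iio (1/4:ℝ)) ε‖
          = ‖iteratedFDeriv ℝ i hfun ε‖ := by
        rw [iteratedFDerivWithin_of_isOpen i isOpen_Iio (show ε ∈ Iio (1/4:ℝ) from hε4)]
      have h1 : ‖iteratedFDerivWithin ℝ i hfun (Iio (1/4:ℝ)) ε‖ ≤ Mh := by
        rw [hw]; exact hMh i hi ε ⟨hε0.le, hε5⟩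
      have h2 : ‖mR‖^i ≤ ε := by
        calc ‖mR‖^i ≤ ε^i := pow_le_pow_left₀ (norm_nonneg _) hnmR i
          _ ≤ ε^1 := pow_le_pow_of_le_one hε0.le hε1 hi1
          _ = ε := pow_one ε
      calc ‖iteratedFDerivWithin ℝ i hfun (Iio (1/4:ℝ)) ε‖ * ‖mR‖^i
          ≤ Mh * ε := mul_le_mul h1 h2 (by positivity) hMh0
        _ ≤ M * ε := by
            apply mul_le_mul_of_nonneg_right (le_max_right _ _) hε0.le
  have hD : ∀ i, 1 ≤ i → i ≤ k → ‖iteratedFDerivWithin ℝ i u₀ s' η‖ ≤ D^i := by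
    intro i h1 h2
    rw [iteratedFDerivWithin_of_isOpen i hs'open hηs']
    have hb : ‖iteratedFDeriv ℝ i u₀ η‖ ≤ Bu :=
      hBu i h2 η (by rw [mem_sphere_zero_iff_norm]; exact hηnorm)
    calc ‖iteratedFDeriv ℝ i u₀ η‖ ≤ Bu := hb
      _ ≤ D := le_max_right _ _
      _ ≤ D^i := le_self_pow₀ hD1 (by omega)
  have hs't : MapsTo u₀ s' t := by
    intro v hv
    have hvU : gE v ∈ U := hv
    have h4 : (4:ℝ) < ‖gE v‖ ^ (2*σ) := hvU
    show mR (u₀ v) ∈ Iio (1/4 : ℝ)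
    rw [hmRapp, mem_Iio, ← hscale v, Real.rpow_neg (norm_nonneg _),
      show (1:ℝ)/4 = 4⁻¹ by norm_num]
    exact inv_strictAnti₀ (by norm_num) h4
  have hAle : ‖iteratedFDerivWithin ℝ k (phi σ ∘ gE) s' η‖ ≤ (Nat.factorial k : ℝ) * (M * ε) * D^k := by
    rw [hAeq]
    exact norm_iteratedFDerivWithin_comp_le hgt ((ufun_smooth σ).mono hs'ne)
      (by exact_mod_cast le_top) htopen.uniqueDiffOn hs'open.uniqueDiffOn hs't hηs' hC hD
  have hfinal : (R⁻¹)^k * ε = R ^ (-(2*σ) - k) := by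
    rw [inv_pow, ← Real.rpow_natCast R k, ← Real.rpow_neg hR.le, hεdef,
      ← Real.rpow_add hR]
    ring_nf
  calc ‖iteratedFDerivWithin ℝ k (phi σ) U ξ‖
      ≤ (R⁻¹)^k * ‖iteratedFDerivWithin ℝ k (phi σ ∘ gE) s' η‖ := hBA
    _ ≤ (R⁻¹)^k * ((Nat.factorial k : ℝ) * (M * ε) * D^k) := by
        apply mul_le_mul_of_nonneg_left hAle (by positivity)
    _ = ((Nat.factorial k : ℝ) * M * D^k) * ((R⁻¹)^k * ε) := by ring
    _ = ((Nat.factorial k : ℝ) * M * D^k) * R ^ (-(2*σ) - k) := by rw [hfinal]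
end
end
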